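/- arXiv:1810.04209 — 3 statements merged into one kernel-verified Lean document; each statement's English description precedes it below -/
import Mathlib

section
/- Let (X,d) be a complete generalized metric space (d may take the value +∞). Assume Ω : X → X is strictly contractive with Lipschitz constant L < 1 (meaning d(Ωx,Ωy) ≤ L·d(x,y) for all x,y). If there exists a nonnegative integer k and x ∈ X with d(Ω^{k+1}x, Ω^k x) < ∞, then: (1) the sequence (Ω^n x) converges to some x*; (2) x* is the unique fixed point of Ω in the set X* = {y ∈ X : d(Ω^k x, y) < ∞}; (3) for every y ∈ X*, d(y, x*) ≤ (1/(1-L)) d(Ωy, y). -/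
open Filter Topology
open scoped ENNReal NNReal

/-- Diaz–Margolis fixed point theorem on a complete generalized metric space
(the distance may take the value `∞`). -/
theorem diaz_margolis {X : Type*} (d : X → X → ℝ≥0∞)
    (h_eq : ∀ x y, d x y = 0 ↔ x = y)
    (h_symm : ∀ x y, d x y = d y x)
    (h_triangle : ∀ x y z, d x z ≤ d x y + d y z)
    (h_complete : ∀ s : ℕ → X,
      (∀ ε : ℝ≥0∞, 0 < ε → ∃ N : ℕ, ∀ m ≥ N, ∀ n ≥ N, d (s m) (s n) < ε) →
      ∃ l : X, Tendsto (fun n => d (s n) l) atTop (𝓝 0))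
    (Ω : X → X) (L : NNReal) (hL : L < 1)
    (h_contr : ∀ x y, d (Ω x) (Ω y) ≤ (L : ℝ≥0∞) * d x y)
    (k : ℕ) (x : X) (h_fin : d (Ω^[k + 1] x) (Ω^[k] x) < ⊤) :
    ∃ xs : X,
      (Tendsto (fun n => d (Ω^[n] x) xs) atTop (𝓝 0)) ∧
      (Ω xs = xs) ∧
      (∀ y, d (Ω^[k] x) y < ⊤ → Ω y = y → y = xs) ∧
      (∀ y, d (Ω^[k] x) y < ⊤ →
        d y xs ≤ ((1 - L : NNReal) : ℝ≥0∞)⁻¹ * d (Ω y) y) := by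
  set a : ℝ≥0∞ := d (Ω^[k + 1] x) (Ω^[k] x) with ha
  set M : ℝ≥0∞ := ((1 - L : NNReal) : ℝ≥0∞) with hM
  have hLlt : (L : ℝ≥0∞) < 1 := by exact_mod_cast hL
  have hM0 : M ≠ 0 := by
    simp only [hM, ne_eq, ENNReal.coe_eq_zero]
    exact (tsub_pos_of_lt hL).ne'
  have hMtop : M ≠ ⊤ := ENNReal.coe_ne_top
  have hMsub : M = 1 - (L : ℝ≥0∞) := by
    rw [hM, ENNReal.coe_sub, ENNReal.coe_one]
  have hML : M + (L : ℝ≥0∞) = 1 := by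
    rw [hM, ← ENNReal.coe_one, ← ENNReal.coe_add]
    norm_cast
    exact tsub_add_cancel_of_le hL.le
  -- step estimate
  have step : ∀ n, d (Ω^[k + n + 1] x) (Ω^[k + n] x) ≤ (L : ℝ≥0∞) ^ n * a := by
    intro n
    induction n with
    | zero => simp [ha]
    | succ n ih =>
      have e1 : Ω^[k + (n + 1) + 1] x = Ω (Ω^[k + n + 1] x) := by
        rw [show k + (n + 1) + 1 = (k + n + 1) + 1 by ring, Function.iterate_succ_apply']
      have e2 : Ω^[k + (n + 1)] x = Ω (Ω^[k + n] x) := by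
        rw [show k + (n + 1) = (k + n) + 1 by ring, Function.iterate_succ_apply']
      calc d (Ω^[k + (n + 1) + 1] x) (Ω^[k + (n + 1)] x)
          ≤ (L : ℝ≥0∞) * d (Ω^[k + n + 1] x) (Ω^[k + n] x) := by
            rw [e1, e2]; exact h_contr _ _
        _ ≤ (L : ℝ≥0∞) * ((L : ℝ≥0∞) ^ n * a) := by
            exact mul_le_mul_right ih _
        _ = (L : ℝ≥0∞) ^ (n + 1) * a := by ring
  -- sum estimate
  have sumB : ∀ m j, d (Ω^[k + m] x) (Ω^[k + m + j] x)
      ≤ (∑ i ∈ Finset.range j, (L : ℝ≥0∞) ^ (m + i)) * a := by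
    intro m j
    induction j with
    | zero => simp [(h_eq _ _).mpr rfl]
    | succ j ih =>
      calc d (Ω^[k + m] x) (Ω^[k + m + (j + 1)] x)
          ≤ d (Ω^[k + m] x) (Ω^[k + m + j] x) + d (Ω^[k + m + j] x) (Ω^[k + m + (j + 1)] x) :=
            h_triangle _ _ _
        _ ≤ (∑ i ∈ Finset.range j, (L : ℝ≥0∞) ^ (m + i)) * a + (L : ℝ≥0∞) ^ (m + j) * a := by
            refine add_le_add ih ?_
            rw [h_symm, show k + m + (j + 1) = k + (m + j) + 1 by ring,
              show k + m + j = k + (m + j) by ring]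
            exact step (m + j)
        _ = (∑ i ∈ Finset.range (j + 1), (L : ℝ≥0∞) ^ (m + i)) * a := by
            rw [Finset.sum_range_succ, add_mul]
  have geo : ∀ m j, (∑ i ∈ Finset.range j, (L : ℝ≥0∞) ^ (m + i)) ≤ (L : ℝ≥0∞) ^ m * M⁻¹ := by
    intro m j
    have h1 : (∑ i ∈ Finset.range j, (L : ℝ≥0∞) ^ (m + i))
        = (L : ℝ≥0∞) ^ m * ∑ i ∈ Finset.range j, (L : ℝ≥0∞) ^ i := by
      rw [Finset.mul_sum]
      exact Finset.sum_congr rfl fun i _ => pow_add _ _ _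
    rw [h1]
    refine mul_le_mul_right ?_ _
    calc (∑ i ∈ Finset.range j, (L : ℝ≥0∞) ^ i) ≤ ∑' i, (L : ℝ≥0∞) ^ i :=
          ENNReal.sum_le_tsum _
      _ = (1 - (L : ℝ≥0∞))⁻¹ := ENNReal.tsum_geometric _
      _ = M⁻¹ := by rw [hMsub]
  have B : ∀ m j, d (Ω^[k + m] x) (Ω^[k + m + j] x) ≤ (L : ℝ≥0∞) ^ m * M⁻¹ * a := by
    intro m j
    exact le_trans (sumB m j) (mul_le_mul_left (geo m j) a)
  -- the bound sequence tends to 0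
  have hbtend : Tendsto (fun m : ℕ => (L : ℝ≥0∞) ^ m * M⁻¹ * a) atTop (𝓝 0) := by
    have h0 : Tendsto (fun m : ℕ => (L : ℝ≥0∞) ^ m) atTop (𝓝 0) :=
      ENNReal.tendsto_pow_atTop_nhds_zero_of_lt_one hLlt
    have hc : M⁻¹ * a ≠ ⊤ := by
      exact ENNReal.mul_ne_top (ENNReal.inv_ne_top.mpr hM0) h_fin.ne
    have := ENNReal.Tendsto.mul_const h0 (Or.inr hc)
    simpa [mul_assoc] using this
  -- Cauchy
  have hcauchy : ∀ ε : ℝ≥0∞, 0 < ε →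
      ∃ N : ℕ, ∀ m ≥ N, ∀ n ≥ N, d (Ω^[m] x) (Ω^[n] x) < ε := by
    intro ε hε
    have := (hbtend.eventually_lt_const hε).exists_forall_of_atTop
    obtain ⟨N, hN⟩ := this
    refine ⟨N + k, ?_⟩
    have key : ∀ m n, N + k ≤ m → m ≤ n → d (Ω^[m] x) (Ω^[n] x) < ε := by
      intro m n hm hmn
      obtain ⟨j, rfl⟩ := Nat.exists_eq_add_of_le hmn
      have hkm : k ≤ m := le_trans (Nat.le_add_left k N) hm
      obtain ⟨m', rfl⟩ := Nat.exists_eq_add_of_le hkm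
      have hm' : N ≤ m' := by omega
      calc d (Ω^[k + m'] x) (Ω^[k + m' + j] x) ≤ (L : ℝ≥0∞) ^ m' * M⁻¹ * a := B m' j
        _ < ε := hN m' hm'
    intro m hm n hn
    rcases le_total m n with h | h
    · exact key m n hm h
    · rw [h_symm]; exact key n m hn h
  obtain ⟨xs, hxs⟩ := h_complete (fun n => Ω^[n] x) hcauchy
  -- fixed point
  have hΩxs : Ω xs = xs := by
    have key : ∀ n, d (Ω xs) xs ≤ (L : ℝ≥0∞) * d (Ω^[n] x) xs + d (Ω^[n + 1] x) xs := by
      intro n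
      calc d (Ω xs) xs ≤ d (Ω xs) (Ω^[n + 1] x) + d (Ω^[n + 1] x) xs := h_triangle _ _ _
        _ ≤ (L : ℝ≥0∞) * d (Ω^[n] x) xs + d (Ω^[n + 1] x) xs := by
            refine add_le_add ?_ le_rfl
            rw [Function.iterate_succ_apply']
            calc d (Ω xs) (Ω (Ω^[n] x)) ≤ (L : ℝ≥0∞) * d xs (Ω^[n] x) := h_contr _ _
              _ = (L : ℝ≥0∞) * d (Ω^[n] x) xs := by rw [h_symm]
    have htend : Tendsto (fun n => (L : ℝ≥0∞) * d (Ω^[n] x) xs + d (Ω^[n + 1] x) xs)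
        atTop (𝓝 0) := by
      have h1 : Tendsto (fun n => (L : ℝ≥0∞) * d (Ω^[n] x) xs) atTop (𝓝 0) := by
        have := ENNReal.Tendsto.const_mul (a := (L : ℝ≥0∞)) hxs (Or.inr ENNReal.coe_ne_top)
        simpa using this
      have h2 : Tendsto (fun n => d (Ω^[n + 1] x) xs) atTop (𝓝 0) :=
        hxs.comp (tendsto_add_atTop_nat 1)
      simpa using h1.add h2
    have hle : d (Ω xs) xs ≤ 0 := ge_of_tendsto htend (Eventually.of_forall key)
    exact (h_eq _ _).mp (le_antisymm hle zero_le)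
  -- finiteness of d (Ω^[k] x) xs
  have hfin2 : d (Ω^[k] x) xs < ⊤ := by
    have h1 : ∀ᶠ n in atTop, d (Ω^[n] x) xs < 1 := hxs.eventually_lt_const zero_lt_one
    obtain ⟨n, hn1, hnk⟩ := (h1.and (eventually_ge_atTop k)).exists
    obtain ⟨j, rfl⟩ := Nat.exists_eq_add_of_le hnk
    calc d (Ω^[k] x) xs ≤ d (Ω^[k] x) (Ω^[k + j] x) + d (Ω^[k + j] x) xs := h_triangle _ _ _
      _ < ⊤ := by
          refine ENNReal.add_lt_top.mpr ⟨?_, lt_of_lt_of_le hn1 le_top⟩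
          have := B 0 j
          simp only [pow_zero, one_mul, Nat.add_zero] at this
          exact lt_of_le_of_lt this
            (ENNReal.mul_lt_top (ENNReal.inv_lt_top.mpr (pos_iff_ne_zero.mpr hM0)) h_fin)
  refine ⟨xs, hxs, hΩxs, ?_, ?_⟩
  · -- uniqueness
    intro y hy hfy
    have hD : d y xs < ⊤ := by
      calc d y xs ≤ d y (Ω^[k] x) + d (Ω^[k] x) xs := h_triangle _ _ _
        _ < ⊤ := ENNReal.add_lt_top.mpr ⟨by rw [h_symm]; exact hy, hfin2⟩
    have hle : d y xs ≤ (L : ℝ≥0∞) * d y xs := by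
      calc d y xs = d (Ω y) (Ω xs) := by rw [hfy, hΩxs]
        _ ≤ (L : ℝ≥0∞) * d y xs := h_contr _ _
    by_contra hne
    have hD0 : d y xs ≠ 0 := fun h0 => hne ((h_eq _ _).mp h0)
    have : (L : ℝ≥0∞) * d y xs < 1 * d y xs :=
      by rw [mul_comm _ (d y xs), mul_comm (1 : ℝ≥0∞)]; exact ENNReal.mul_lt_mul_right hD0 hD.ne hLlt
    rw [one_mul] at this
    exact absurd (lt_of_le_of_lt hle this) (lt_irrefl _)
  · -- estimate
    intro y hy
    rcases eq_top_or_lt_top (d (Ω y) y) with htop | hfinA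
    · rw [htop, ENNReal.mul_top (ENNReal.inv_ne_zero.mpr hMtop)]
      exact le_top
    have hD : d y xs < ⊤ := by
      calc d y xs ≤ d y (Ω^[k] x) + d (Ω^[k] x) xs := h_triangle _ _ _
        _ < ⊤ := ENNReal.add_lt_top.mpr ⟨by rw [h_symm]; exact hy, hfin2⟩
    have hle : d y xs ≤ d (Ω y) y + (L : ℝ≥0∞) * d y xs := by
      calc d y xs ≤ d y (Ω y) + d (Ω y) xs := h_triangle _ _ _
        _ ≤ d (Ω y) y + (L : ℝ≥0∞) * d y xs := by
            refine add_le_add (le_of_eq (h_symm _ _)) ?_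
            calc d (Ω y) xs = d (Ω y) (Ω xs) := by rw [hΩxs]
              _ ≤ (L : ℝ≥0∞) * d y xs := h_contr _ _
    have hLD : (L : ℝ≥0∞) * d y xs ≠ ⊤ := ENNReal.mul_ne_top ENNReal.coe_ne_top hD.ne
    have hsplit : d y xs = M * d y xs + (L : ℝ≥0∞) * d y xs := by
      rw [← add_mul, hML, one_mul]
    have h2 : M * d y xs ≤ d (Ω y) y := by
      nth_rewrite 1 [hsplit] at hle
      exact (ENNReal.add_le_add_iff_right hLD).mp hle
    rw [← ENNReal.div_eq_inv_mul]
    rw [ENNReal.le_div_iff_mul_le (Or.inl hM0) (Or.inl hMtop)]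
    rw [mul_comm]
    exact h2
end

section
/- Let Ψ : [a,∞) → ℝ be C¹, increasing with Ψ' ≠ 0, μ > 0, and let φ(t) = E_μ((Ψ(t)-Ψ(a))^μ) where E_μ is the Mittag-Leffler function. Then φ is increasing and satisfies (1/Γ(μ))∫_a^t Ψ'(s)(Ψ(t)-Ψ(s))^{μ-1}φ(s) ds ≤ φ(t) for all t ≥ a, i.e., condition (ẽ) of the Ulam–Hyers–Rassias framework holds with λ = 1. -/
open Set Real MeasureTheory
open Filter
open scoped Topology

/-- The one-parameter Mittag-Leffler function `E_μ(z) = Σ_{k≥0} z^k / Γ(μk+1)`. -/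
noncomputable def mittagLeffler (μ z : ℝ) : ℝ :=
  ∑' k : ℕ, z ^ k / Real.Gamma (μ * k + 1)

namespace MLaux

lemma gamma_slope {A μ : ℝ} (hA : 0 < A) (hμ : 0 < μ) :
    Real.Gamma (A + 1) * A ^ μ ≤ Real.Gamma (A + 1 + μ) := by
  have h0 : (0:ℝ) < A + 1 := by linarith
  have h1 : (0:ℝ) < A + 1 + μ := by linarith
  have hs := Real.convexOn_log_Gamma.slope_mono_adjacent (Set.mem_Ioi.mpr hA)
      (Set.mem_Ioi.mpr h1) (by linarith : A < A + 1) (by linarith : A + 1 < A + 1 + μ)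
  simp only [Function.comp_apply] at hs
  have e1 : A + 1 - A = 1 := by ring
  have e2 : A + 1 + μ - (A + 1) = μ := by ring
  rw [e1, e2, div_one, Real.Gamma_add_one hA.ne',
    Real.log_mul hA.ne' (Real.Gamma_pos_of_pos hA).ne'] at hs
  have hs' : μ * Real.log A + (Real.log A + Real.log (Real.Gamma A)) ≤
      Real.log (Real.Gamma (A + 1 + μ)) := by
    rw [le_div_iff₀ hμ] at hs
    nlinarith
  have h2 := Real.exp_le_exp.mpr hs'
  rw [Real.exp_add, Real.exp_add, Real.exp_log hA,
    Real.exp_log (Real.Gamma_pos_of_pos hA), Real.exp_log (Real.Gamma_pos_of_pos h1),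
    mul_comm (μ : ℝ) (Real.log A), ← Real.rpow_def_of_pos hA] at h2
  calc Real.Gamma (A + 1) * A ^ μ = A ^ μ * (A * Real.Gamma A) := by
        rw [Real.Gamma_add_one hA.ne']; ring
    _ ≤ _ := h2

lemma summableML {μ : ℝ} (hμ : 0 < μ) (z : ℝ) :
    Summable (fun k : ℕ => z ^ k / Real.Gamma (μ * k + 1)) := by
  apply summable_of_ratio_norm_eventually_le (r := 1/2) (by norm_num)
  have h1 : Tendsto (fun k : ℕ => μ * (k:ℝ)) atTop atTop :=
    Tendsto.const_mul_atTop hμ tendsto_natCast_atTop_atTop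
  have htend : Tendsto (fun k : ℕ => (μ * (k:ℝ)) ^ μ) atTop atTop :=
    (tendsto_rpow_atTop hμ).comp h1
  filter_upwards [htend.eventually_ge_atTop (2 * |z|), Filter.eventually_gt_atTop 0]
    with k hk hk0
  have hkpos : (0:ℝ) < μ * k := by
    have : (0:ℝ) < (k:ℝ) := by exact_mod_cast hk0
    positivity
  have hG0 : 0 < Real.Gamma (μ * k + 1) := Real.Gamma_pos_of_pos (by positivity)
  have hG1 : 0 < Real.Gamma (μ * (k+1:ℕ) + 1) := Real.Gamma_pos_of_pos (by positivity)
  have hP : 0 < (μ * (k:ℝ)) ^ μ := Real.rpow_pos_of_pos hkpos μ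
  have key : Real.Gamma (μ * k + 1) * (μ * (k:ℝ)) ^ μ ≤ Real.Gamma (μ * (k+1:ℕ) + 1) := by
    have := gamma_slope hkpos hμ
    have e : μ * (k:ℝ) + 1 + μ = μ * ((k:ℕ)+1:ℕ) + 1 := by push_cast; ring
    rwa [e] at this
  rw [norm_div, norm_div, norm_pow, norm_pow, Real.norm_eq_abs (Real.Gamma _),
    Real.norm_eq_abs (Real.Gamma _), abs_of_pos hG0, abs_of_pos hG1, Real.norm_eq_abs]
  calc |z| ^ (k+1) / Real.Gamma (μ * (k+1:ℕ) + 1)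
      ≤ |z| ^ (k+1) / (Real.Gamma (μ * k + 1) * (μ * (k:ℝ)) ^ μ) := by
        exact div_le_div_of_nonneg_left (by positivity) (by positivity) key
    _ = (|z| / (μ * (k:ℝ)) ^ μ) * (|z| ^ k / Real.Gamma (μ * k + 1)) := by
        rw [pow_succ]; field_simp
    _ ≤ (1/2) * (|z| ^ k / Real.Gamma (μ * k + 1)) := by
        apply mul_le_mul_of_nonneg_right ?_ (by positivity)
        rw [div_le_iff₀ hP]
        linarith

lemma Gpos {μ : ℝ} (hμ : 0 < μ) (k : ℕ) : 0 < Real.Gamma (μ * k + 1) :=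
  Real.Gamma_pos_of_pos (by positivity)

lemma ML_nonneg {μ : ℝ} (hμ : 0 < μ) {z : ℝ} (hz : 0 ≤ z) : 0 ≤ mittagLeffler μ z :=
  tsum_nonneg fun k => div_nonneg (pow_nonneg hz k) (Gpos hμ k).le

lemma ML_lt {μ : ℝ} (hμ : 0 < μ) {z₁ z₂ : ℝ} (h0 : 0 ≤ z₁) (h : z₁ < z₂) :
    mittagLeffler μ z₁ < mittagLeffler μ z₂ := by
  apply Summable.tsum_lt_tsum_of_nonneg (i := 1)
  · exact fun k => div_nonneg (pow_nonneg h0 k) (Gpos hμ k).le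
  · intro k
    gcongr
  · gcongr
  · exact summableML hμ z₂

lemma ML_continuousOn {μ R : ℝ} (hμ : 0 < μ) (hR : (0:ℝ) ≤ R) :
    ContinuousOn (mittagLeffler μ) (Icc 0 R) := by
  apply continuousOn_tsum (u := fun k : ℕ => R ^ k / Real.Gamma (μ * k + 1))
  · exact fun i => (continuous_pow i).continuousOn.div_const _
  · exact summableML hμ R
  · intro k z hz
    rw [norm_div, norm_pow, Real.norm_eq_abs, Real.norm_eq_abs, abs_of_pos (Gpos hμ k),
      abs_of_nonneg hz.1]
    gcongr
    · exact hz.1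
    · exact hz.2

lemma hasDerivAt_of {Ψ : ℝ → ℝ} {a x : ℝ} (hΨC1 : ContDiffOn ℝ 1 Ψ (Ici a)) (hx : a < x) :
    HasDerivAt Ψ (deriv Ψ x) x := by
  have hmem : Ici a ∈ nhds x := Filter.mem_of_superset (isOpen_Ioi.mem_nhds hx)
    Ioi_subset_Ici_self
  exact ((hΨC1.contDiffAt hmem).differentiableAt one_ne_zero).hasDerivAt

lemma deriv_nonneg_of_mono {Ψ : ℝ → ℝ} {a x : ℝ} (hΨC1 : ContDiffOn ℝ 1 Ψ (Ici a))
    (hmono : StrictMonoOn Ψ (Ici a)) (hx : a < x) : 0 ≤ deriv Ψ x := by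
  have hd := (hasDerivAt_of hΨC1 hx).hasDerivWithinAt (s := Ioi x)
  rw [hasDerivWithinAt_iff_tendsto_slope, diff_singleton_eq_self (notMem_Ioi.mpr le_rfl)] at hd
  refine ge_of_tendsto hd ?_
  filter_upwards [self_mem_nhdsWithin] with y hy
  rw [slope_def_field]
  apply div_nonneg _ (by simp only [mem_Ioi] at hy; linarith)
  have : Ψ x ≤ Ψ y := (hmono.monotoneOn) (mem_Ici.mpr hx.le)
    (mem_Ici.mpr (hx.le.trans (le_of_lt hy))) (le_of_lt hy)
  linarith

lemma real_beta {p q : ℝ} (hp : 0 < p) (hq : 0 < q) :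
    ∫ x in (0:ℝ)..1, x ^ (p-1) * (1-x) ^ (q-1) =
      Real.Gamma p * Real.Gamma q / Real.Gamma (p+q) := by
  have h := Complex.Gamma_mul_Gamma_eq_betaIntegral (s := (p:ℂ)) (t := (q:ℂ))
    (by simpa using hp) (by simpa using hq)
  have h2 : Complex.betaIntegral p q =
      ((∫ x in (0:ℝ)..1, x ^ (p-1) * (1-x) ^ (q-1) : ℝ) : ℂ) := by
    rw [Complex.betaIntegral, ← intervalIntegral.integral_ofReal]
    apply intervalIntegral.integral_congr
    intro x hx
    rw [uIcc_of_le (by norm_num : (0:ℝ) ≤ 1)] at hx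
    show _ = ((x ^ (p-1) * (1-x) ^ (q-1) : ℝ) : ℂ)
    rw [Complex.ofReal_mul, Complex.ofReal_cpow hx.1, Complex.ofReal_cpow (by linarith [hx.2])]
    push_cast
    ring
  rw [h2, ← Complex.ofReal_add, Complex.Gamma_ofReal, Complex.Gamma_ofReal,
    Complex.Gamma_ofReal, ← Complex.ofReal_mul, ← Complex.ofReal_mul] at h
  have h3 := Complex.ofReal_inj.mp h
  have hΓ : Real.Gamma (p + q) ≠ 0 := (Real.Gamma_pos_of_pos (by linarith)).ne'
  field_simp at h3 ⊢
  linarith [h3]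

lemma beta_intervalIntegrable {p q b c : ℝ} (hp : 0 < p) (hq : 0 < q) (hbc : b < c) :
    IntervalIntegrable (fun u => (u-b)^(p-1) * (c-u)^(q-1)) volume b c := by
  set m := (b+c)/2 with hm
  have hbm : b < m := by rw [hm]; linarith
  have hmc : m < c := by rw [hm]; linarith
  have h1 : IntervalIntegrable (fun u => (u-b)^(p-1) * (c-u)^(q-1)) volume b m := by
    apply IntervalIntegrable.mul_continuousOn
    · have := (intervalIntegral.intervalIntegrable_rpow' (r := p-1) (a := 0) (b := m - b)
        (by linarith)).comp_sub_right b
      simpa using this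
    · intro u hu
      rw [uIcc_of_le hbm.le] at hu
      have hne : c - u ≠ 0 := by
        have h2u : u ≤ (b+c)/2 := by simpa [hm] using hu.2
        intro h; linarith
      exact (((continuous_const.sub continuous_id).continuousAt).rpow_const
        (Or.inl hne)).continuousWithinAt
  have h2 : IntervalIntegrable (fun u => (u-b)^(p-1) * (c-u)^(q-1)) volume m c := by
    apply IntervalIntegrable.continuousOn_mul (g := fun u => (u-b)^(p-1))
      (f := fun u => (c-u)^(q-1))
    · have := (intervalIntegral.intervalIntegrable_rpow' (r := q-1) (a := c - m) (b := 0)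
        (by linarith)).comp_sub_left c
      simpa using this
    · intro u hu
      rw [uIcc_of_le hmc.le] at hu
      have hne : u - b ≠ 0 := by
        have h1u : (b+c)/2 ≤ u := by simpa [hm] using hu.1
        intro h; linarith
      exact (((continuous_id.sub continuous_const).continuousAt).rpow_const
        (Or.inl hne)).continuousWithinAt
  exact h1.trans h2

lemma beta_value {p q b c : ℝ} (hp : 0 < p) (hq : 0 < q) (hbc : b < c) :
    ∫ u in b..c, (u-b)^(p-1) * (c-u)^(q-1) =
      (c-b)^(p+q-1) * (Real.Gamma p * Real.Gamma q / Real.Gamma (p+q)) := by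
  set X := c - b with hXdef
  have hX : 0 < X := by rw [hXdef]; linarith
  have h1 : (∫ u in b..c, (u-b)^(p-1) * (c-u)^(q-1))
      = ∫ x in (0:ℝ)..X, x^(p-1) * (X-x)^(q-1) := by
    have e : (fun u => (u-b)^(p-1) * (c-u)^(q-1))
        = fun u => ((u - b)^(p-1) * (X-(u-b))^(q-1)) := by
      funext u
      have : X - (u - b) = c - u := by rw [hXdef]; ring
      rw [this]
    rw [e, intervalIntegral.integral_comp_sub_right (fun x => x^(p-1) * (X-x)^(q-1)) b,
      sub_self]
  have h2 := intervalIntegral.integral_comp_mul_right (a := (0:ℝ)) (b := 1)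
    (fun x => x^(p-1) * (X-x)^(q-1)) hX.ne'
  simp only [zero_mul, one_mul, smul_eq_mul] at h2
  have h3 : (∫ y in (0:ℝ)..1, (y*X)^(p-1)*(X - y*X)^(q-1))
      = X^(p-1) * X^(q-1) * ∫ y in (0:ℝ)..1, y^(p-1)*(1-y)^(q-1) := by
    rw [← intervalIntegral.integral_const_mul]
    apply intervalIntegral.integral_congr
    intro y hy
    rw [uIcc_of_le (by norm_num : (0:ℝ) ≤ 1)] at hy
    have hy0 : 0 ≤ y := hy.1
    have hy1 : 0 ≤ 1 - y := by linarith [hy.2]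
    simp only
    rw [show X - y*X = (1-y)*X by ring, Real.mul_rpow hy0 hX.le, Real.mul_rpow hy1 hX.le]
    ring
  have hXpq : X^(p-1) * X^(q-1) * X = X^(p+q-1) := by
    rw [← Real.rpow_add hX, ← Real.rpow_add_one hX.ne']
    congr 1
    ring
  rw [h3, real_beta hp hq, inv_mul_eq_div, eq_div_iff hX.ne'] at h2
  rw [h1, ← h2, ← hXpq]
  ring

end MLaux

/-- The function `φ(t) = E_μ((Ψ(t)-Ψ(a))^μ)` is increasing on `[a,∞)` and
satisfies condition (ẽ) of the Ulam–Hyers–Rassias framework with `λ = 1`: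
`(1/Γ(μ)) ∫_a^t Ψ'(s)(Ψ(t)-Ψ(s))^{μ-1} φ(s) ds ≤ φ(t)` for `t ≥ a`. -/
theorem mittagLeffler_satisfies_lambda_condition (Ψ : ℝ → ℝ) (a μ : ℝ)
    (hΨC1 : ContDiffOn ℝ 1 Ψ (Ici a)) (hΨmono : StrictMonoOn Ψ (Ici a))
    (hΨ' : ∀ t ∈ Ici a, deriv Ψ t ≠ 0) (hμ : 0 < μ) :
    StrictMonoOn (fun t => mittagLeffler μ ((Ψ t - Ψ a) ^ μ)) (Ici a) ∧
    ∀ t ∈ Ici a,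
      (1 / Real.Gamma μ) *
          ∫ s in a..t, deriv Ψ s * (Ψ t - Ψ s) ^ (μ - 1) *
            mittagLeffler μ ((Ψ s - Ψ a) ^ μ) ≤
        mittagLeffler μ ((Ψ t - Ψ a) ^ μ) := by
  have hΓμ : 0 < Real.Gamma μ := Real.Gamma_pos_of_pos hμ
  constructor
  · intro s hs t ht hst
    have h0 : Ψ a ≤ Ψ s := hΨmono.monotoneOn self_mem_Ici hs (mem_Ici.mp hs)
    have h1 : Ψ s < Ψ t := hΨmono hs ht hst
    exact MLaux.ML_lt hμ (Real.rpow_nonneg (by linarith) μ)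
      (Real.rpow_lt_rpow (by linarith) (by linarith) hμ)
  · intro t ht
    rcases eq_or_lt_of_le (mem_Ici.mp ht) with heq | hat
    · rw [← heq, intervalIntegral.integral_same, mul_zero]
      exact MLaux.ML_nonneg hμ (Real.rpow_nonneg (by simp) μ)
    have hbc : Ψ a < Ψ t := hΨmono self_mem_Ici ht hat
    have hX : (0:ℝ) < Ψ t - Ψ a := by linarith
    have hicc : ContinuousOn Ψ (Icc a t) := hΨC1.continuousOn.mono Icc_subset_Ici_self
    have himg : Ψ '' Ioc a t = Ioc (Ψ a) (Ψ t) := by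
      apply Subset.antisymm
      · rintro _ ⟨s, hs, rfl⟩
        exact ⟨hΨmono self_mem_Ici (mem_Ici.mpr hs.1.le) hs.1,
          hΨmono.monotoneOn (mem_Ici.mpr hs.1.le) ht hs.2⟩
      · exact intermediate_value_Ioc (mem_Ici.mp ht) hicc
    have hderiv : ∀ s ∈ Ioc a t, HasDerivWithinAt Ψ (deriv Ψ s) (Ioc a t) s :=
      fun s hs => (MLaux.hasDerivAt_of hΨC1 hs.1).hasDerivWithinAt
    have hinj : InjOn Ψ (Ioc a t) := hΨmono.injOn.mono fun s hs => mem_Ici.mpr hs.1.le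
    have hdnn : ∀ s ∈ Ioc a t, 0 ≤ deriv Ψ s :=
      fun s hs => MLaux.deriv_nonneg_of_mono hΨC1 hΨmono hs.1
    set g : ℝ → ℝ := fun u => (Ψ t - u) ^ (μ-1) * mittagLeffler μ ((u - Ψ a) ^ μ) with hg
    have h1 : (∫ s in a..t, deriv Ψ s * (Ψ t - Ψ s) ^ (μ-1) * mittagLeffler μ ((Ψ s - Ψ a) ^ μ))
        = ∫ u in Ioc (Ψ a) (Ψ t), g u := by
      rw [intervalIntegral.integral_of_le hat.le, ← himg,
        MeasureTheory.integral_image_eq_integral_abs_deriv_smul measurableSet_Ioc hderiv hinj g]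
      apply setIntegral_congr_fun measurableSet_Ioc
      intro s hs
      simp only [hg, smul_eq_mul]
      rw [abs_of_nonneg (hdnn s hs)]
      ring
    -- continuity / measurability of g
    have hRnn : (0:ℝ) ≤ (Ψ t - Ψ a) ^ μ := Real.rpow_nonneg hX.le μ
    have hMLcont : ContinuousOn (fun u => mittagLeffler μ ((u - Ψ a) ^ μ))
        (Icc (Ψ a) (Ψ t)) := by
      apply (MLaux.ML_continuousOn hμ hRnn).comp
      · intro u _
        exact (((continuous_id.sub continuous_const).continuousAt).rpow_const
          (Or.inr hμ.le)).continuousWithinAt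
      · intro u hu
        exact ⟨Real.rpow_nonneg (by linarith [hu.1]) μ,
          Real.rpow_le_rpow (by linarith [hu.1]) (by linarith [hu.2]) hμ.le⟩
    have hgmeas : AEStronglyMeasurable g (volume.restrict (Ioc (Ψ a) (Ψ t))) := by
      apply AEStronglyMeasurable.mul
      · exact (Measurable.aestronglyMeasurable (by fun_prop))
      · exact (hMLcont.mono Ioc_subset_Icc_self).aestronglyMeasurable measurableSet_Ioc
    have hgnn : 0 ≤ᵐ[volume.restrict (Ioc (Ψ a) (Ψ t))] g := by
      filter_upwards [ae_restrict_mem measurableSet_Ioc] with u hu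
      exact mul_nonneg (Real.rpow_nonneg (by linarith [hu.2]) _)
        (MLaux.ML_nonneg hμ (Real.rpow_nonneg (by linarith [hu.1]) μ))
    -- term functions
    set G : ℕ → ℝ → ℝ :=
      fun k u => (Ψ t - u) ^ (μ-1) * (((u - Ψ a) ^ μ) ^ k / Real.Gamma (μ * k + 1)) with hG
    have hg_eq : ∀ u ∈ Ioc (Ψ a) (Ψ t), g u = ∑' k, G k u := by
      intro u _
      rw [hg]
      simp only [mittagLeffler, hG]
      exact tsum_mul_left.symm
    have hGnn : ∀ (k : ℕ) u, u ∈ Ioc (Ψ a) (Ψ t) → 0 ≤ G k u := by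
      intro k u hu
      apply mul_nonneg (Real.rpow_nonneg (by linarith [hu.2]) _)
      apply div_nonneg (pow_nonneg (Real.rpow_nonneg (by linarith [hu.1]) _) _) (MLaux.Gpos hμ k).le
    have hGsum : ∀ u, Summable (fun k => G k u) :=
      fun u => (MLaux.summableML hμ ((u - Ψ a) ^ μ)).mul_left _
    have hGmeas : ∀ k : ℕ, Measurable (G k) := by
      intro k
      apply Measurable.mul (by fun_prop)
      exact (Measurable.pow_const (by fun_prop) k).div_const _
    -- value of each term integral
    set W : ℕ → ℝ := fun j => ((Ψ t - Ψ a) ^ μ) ^ j / Real.Gamma (μ * j + 1) with hW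
    have hGint : ∀ k : ℕ, IntegrableOn (G k) (Ioc (Ψ a) (Ψ t)) ∧
        ∫ u in Ioc (Ψ a) (Ψ t), G k u = Real.Gamma μ * W (k+1) := by
      intro k
      have hp : (0:ℝ) < μ * k + 1 := by positivity
      have hcong : EqOn (G k)
          (fun u => ((u - Ψ a) ^ (μ * k + 1 - 1) * (Ψ t - u) ^ (μ - 1)) / Real.Gamma (μ * k + 1))
          (Ioc (Ψ a) (Ψ t)) := by
        intro u hu
        simp only [hG]
        rw [← Real.rpow_natCast ((u - Ψ a) ^ μ) k, ← Real.rpow_mul (by linarith [hu.1] : (0:ℝ) ≤ u - Ψ a)]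
        rw [show μ * k + 1 - 1 = μ * k from by ring]
        ring
      have hbint := MLaux.beta_intervalIntegrable (p := μ * k + 1) (q := μ) hp hμ hbc
      constructor
      · apply MeasureTheory.IntegrableOn.congr_fun _ hcong.symm measurableSet_Ioc
        exact hbint.1.div_const _
      · rw [setIntegral_congr_fun measurableSet_Ioc hcong, integral_div,
          ← intervalIntegral.integral_of_le hbc.le,
          MLaux.beta_value hp hμ hbc]
        rw [show μ * k + 1 + μ - 1 = μ * ((k:ℝ) + 1) from by ring]
        rw [Real.rpow_mul hX.le, show ((k:ℝ) + 1) = ((k+1 : ℕ) : ℝ) from by push_cast; ring,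
          Real.rpow_natCast]
        rw [hW]
        have hΓ1 : Real.Gamma (μ * k + 1) ≠ 0 := (MLaux.Gpos hμ k).ne'
        have e2 : μ * k + 1 + μ = μ * ((k+1:ℕ):ℝ) + 1 := by push_cast; ring
        rw [e2]
        have hΓ2 : Real.Gamma (μ * ((k+1:ℕ):ℝ) + 1) ≠ 0 := (MLaux.Gpos hμ (k+1)).ne'
        field_simp
    -- summability of the values
    have hWsum : Summable W := MLaux.summableML hμ _
    have hW0 : W 0 = 1 := by simp [hW, Real.Gamma_one]
    have hWshift : Summable (fun k => W (k+1)) := (summable_nat_add_iff 1).mpr hWsum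
    have hVsum : Summable (fun k => Real.Gamma μ * W (k+1)) := hWshift.mul_left _
    have hVnn : ∀ k : ℕ, 0 ≤ Real.Gamma μ * W (k+1) := fun k =>
      mul_nonneg hΓμ.le (div_nonneg (pow_nonneg hRnn _) (MLaux.Gpos hμ _).le)
    have hMLW : mittagLeffler μ ((Ψ t - Ψ a) ^ μ) = 1 + ∑' k, W (k+1) := by
      rw [show mittagLeffler μ ((Ψ t - Ψ a) ^ μ) = ∑' j, W j from rfl,
        Summable.tsum_eq_zero_add hWsum, hW0]
    have key : ∫ u in Ioc (Ψ a) (Ψ t), g u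
        = Real.Gamma μ * (mittagLeffler μ ((Ψ t - Ψ a) ^ μ) - 1) := by
      rw [MeasureTheory.integral_eq_lintegral_of_nonneg_ae hgnn hgmeas]
      have e1 : ∫⁻ u in Ioc (Ψ a) (Ψ t), ENNReal.ofReal (g u)
          = ∫⁻ u in Ioc (Ψ a) (Ψ t), ∑' k, ENNReal.ofReal (G k u) := by
        apply setLIntegral_congr_fun measurableSet_Ioc
        intro u hu
        beta_reduce
        rw [hg_eq u hu, ENNReal.ofReal_tsum_of_nonneg (fun k => hGnn k u hu) (hGsum u)]
      have e2 : ∫⁻ u in Ioc (Ψ a) (Ψ t), ∑' k, ENNReal.ofReal (G k u)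
          = ∑' k, ∫⁻ u in Ioc (Ψ a) (Ψ t), ENNReal.ofReal (G k u) :=
        lintegral_tsum (fun k => ((hGmeas k).ennreal_ofReal).aemeasurable)
      have e3 : ∀ k : ℕ, ∫⁻ u in Ioc (Ψ a) (Ψ t), ENNReal.ofReal (G k u)
          = ENNReal.ofReal (Real.Gamma μ * W (k+1)) := by
        intro k
        rw [← (hGint k).2]
        refine (MeasureTheory.ofReal_integral_eq_lintegral_ofReal (hGint k).1 ?_).symm
        filter_upwards [ae_restrict_mem measurableSet_Ioc] with u hu
        exact hGnn k u hu
      rw [e1, e2, tsum_congr e3, ← ENNReal.ofReal_tsum_of_nonneg hVnn hVsum,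
        ENNReal.toReal_ofReal (tsum_nonneg hVnn), tsum_mul_left, hMLW]
      ring
    rw [h1, key, one_div, inv_mul_cancel_left₀ hΓμ.ne']
    have := MLaux.ML_nonneg hμ hRnn
    linarith
end

section
/- Let Ψ : [a,b] → ℝ be C¹, increasing with Ψ' ≠ 0, μ > 0, and a ≤ s < t ≤ b. Then for every constant g ≥ 0, the series Σ_{k=1}^∞ ((gΓ(μ))^k/Γ(μk)) (Ψ(t)-Ψ(s))^{kμ-1} converges, and ∫_a^t Ψ'(s) Σ_{k=1}^∞ ((gΓ(μ))^k/Γ(μk))(Ψ(t)-Ψ(s))^{kμ-1} ds = E_μ(gΓ(μ)(Ψ(t)-Ψ(a))^μ) - 1. -/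
open Set Real MeasureTheory Filter

/-- Log-convexity of `Γ` gives `Γ(y) (y-1)^μ ≤ Γ(y+μ)` for `y ≥ 2`. -/
lemma gamma_ratio_aux {μ y : ℝ} (hμ : 0 < μ) (hy : 2 ≤ y) :
    Real.Gamma y * (y - 1) ^ μ ≤ Real.Gamma (y + μ) := by
  have hy1 : (1 : ℝ) ≤ y - 1 := by linarith
  have hy1' : (0 : ℝ) < y - 1 := by linarith
  have hy0 : (0 : ℝ) < y := by linarith
  have hyμ : (0 : ℝ) < y + μ := by linarith
  have hΓy : 0 < Real.Gamma y := Real.Gamma_pos_of_pos hy0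
  have hΓy1 : 0 < Real.Gamma (y - 1) := Real.Gamma_pos_of_pos hy1'
  have hΓyμ : 0 < Real.Gamma (y + μ) := Real.Gamma_pos_of_pos hyμ
  have hslope := Real.convexOn_log_Gamma.slope_mono_adjacent
    (show y - 1 ∈ Ioi (0:ℝ) from hy1') (show y + μ ∈ Ioi (0:ℝ) from hyμ)
    (show y - 1 < y by linarith) (show y < y + μ by linarith)
  have hGam : Real.Gamma y = (y - 1) * Real.Gamma (y - 1) := by
    have := Real.Gamma_add_one (s := y - 1) hy1'.ne'
    rw [show y - 1 + 1 = y by ring] at this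
    exact this
  have hlog : (Real.log ∘ Real.Gamma) y - (Real.log ∘ Real.Gamma) (y - 1)
      = Real.log (y - 1) := by
    simp only [Function.comp_apply, hGam]
    rw [Real.log_mul hy1'.ne' hΓy1.ne']
    ring
  rw [div_le_div_iff₀ (by linarith) (by linarith)] at hslope
  -- hslope : (f y - f (y-1)) * ((y+μ) - y) ≤ (f (y+μ) - f y) * (y - (y-1))
  have key : μ * Real.log (y - 1) + Real.log (Real.Gamma y)
      ≤ Real.log (Real.Gamma (y + μ)) := by
    have h1 : (Real.log ∘ Real.Gamma) y = Real.log (Real.Gamma y) := rfl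
    have h2 : (Real.log ∘ Real.Gamma) (y + μ) = Real.log (Real.Gamma (y + μ)) := rfl
    nlinarith [hslope, hlog]
  calc Real.Gamma y * (y - 1) ^ μ
      = Real.exp (μ * Real.log (y - 1) + Real.log (Real.Gamma y)) := by
        rw [Real.exp_add, Real.rpow_def_of_pos hy1', Real.exp_log hΓy]; ring
    _ ≤ Real.exp (Real.log (Real.Gamma (y + μ))) := Real.exp_le_exp.2 key
    _ = Real.Gamma (y + μ) := Real.exp_log hΓyμ

/-- Summability of Mittag-Leffler type series. -/
lemma summable_gamma_series {μ b z : ℝ} (hμ : 0 < μ) (hb : 0 < b) (hz : 0 ≤ z) :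
    Summable (fun k : ℕ => z ^ k / Real.Gamma (μ * k + b)) := by
  apply summable_of_ratio_norm_eventually_le (r := 1/2) (by norm_num)
  have hbase : Tendsto (fun k : ℕ => μ * k + b - 1) atTop atTop := by
    have h := tendsto_atTop_add_const_right atTop (b - 1)
      (tendsto_natCast_atTop_atTop.const_mul_atTop hμ : Tendsto (fun k : ℕ => μ * k) atTop atTop)
    simpa [add_sub_assoc] using h
  have hpow : Tendsto (fun k : ℕ => (μ * k + b - 1) ^ μ) atTop atTop :=
    (tendsto_rpow_atTop hμ).comp hbase
  filter_upwards [hpow.eventually_ge_atTop (2 * z + 2),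
    hbase.eventually_ge_atTop 1] with k hk1 hk2
  set y := μ * (k : ℝ) + b with hy
  have hy2 : 2 ≤ y := by simp only [hy]; linarith
  have hy0 : 0 < y := by linarith
  have hΓy : 0 < Real.Gamma y := Real.Gamma_pos_of_pos hy0
  have hΓyμ : 0 < Real.Gamma (y + μ) := Real.Gamma_pos_of_pos (by linarith)
  have hkey : Real.Gamma y * (y - 1) ^ μ ≤ Real.Gamma (y + μ) := gamma_ratio_aux hμ hy2
  have hyk1 : μ * ((k : ℝ) + 1) + b = y + μ := by simp only [hy]; push_cast; ring
  rw [show ((k : ℕ) + 1 : ℕ) = k + 1 from rfl]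
  have hcast : μ * ((k + 1 : ℕ) : ℝ) + b = y + μ := by push_cast; simp only [hy]; ring
  rw [hcast]
  rw [Real.norm_of_nonneg (div_nonneg (pow_nonneg hz _) hΓyμ.le),
    Real.norm_of_nonneg (div_nonneg (pow_nonneg hz _) hΓy.le)]
  have h2z : Real.Gamma y * (2 * z + 2) ≤ Real.Gamma (y + μ) := by
    calc Real.Gamma y * (2 * z + 2) ≤ Real.Gamma y * (y - 1) ^ μ := by
          apply mul_le_mul_of_nonneg_left hk1 hΓy.le
      _ ≤ Real.Gamma (y + μ) := hkey
  have hpos : 0 < Real.Gamma y * (2 * z + 2) := by positivity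
  calc z ^ (k + 1) / Real.Gamma (y + μ)
      ≤ z ^ (k + 1) / (Real.Gamma y * (2 * z + 2)) := by
        apply div_le_div_of_nonneg_left (pow_nonneg hz _) hpos h2z
    _ = (z / (2 * z + 2)) * (z ^ k / Real.Gamma y) := by
        rw [pow_succ]; field_simp
    _ ≤ (1/2) * (z ^ k / Real.Gamma y) := by
        apply mul_le_mul_of_nonneg_right _ (div_nonneg (pow_nonneg hz _) hΓy.le)
        rw [div_le_div_iff₀ (by linarith) (by norm_num)]
        linarith

/-- The Gronwall series kernel `Σ_{k≥1} ((gΓ(μ))^k/Γ(μk)) (Ψ(t)-Ψ(s))^{kμ-1}`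
converges for `a ≤ s < t`, and its integral against `Ψ'` over `(a,t)` equals
`E_μ(gΓ(μ)(Ψ(t)-Ψ(a))^μ) - 1`. -/
theorem gronwall_series_integral (Ψ : ℝ → ℝ) (a b μ g : ℝ) (hab : a < b)
    (hΨC1 : ContDiffOn ℝ 1 Ψ (Icc a b)) (hΨmono : StrictMonoOn Ψ (Icc a b))
    (hΨ' : ∀ t ∈ Icc a b, deriv Ψ t ≠ 0) (hμ : 0 < μ) (hg : 0 ≤ g) :
    ∀ t ∈ Ioc a b,
      (∀ s ∈ Ico a t, Summable (fun k : ℕ =>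
        ((g * Real.Gamma μ) ^ (k + 1) / Real.Gamma (μ * (k + 1))) *
          (Ψ t - Ψ s) ^ ((k + 1 : ℕ) * μ - 1))) ∧
      ∫ s in a..t, deriv Ψ s *
          ∑' k : ℕ, ((g * Real.Gamma μ) ^ (k + 1) / Real.Gamma (μ * (k + 1))) *
            (Ψ t - Ψ s) ^ ((k + 1 : ℕ) * μ - 1) =
        mittagLeffler μ (g * Real.Gamma μ * (Ψ t - Ψ a) ^ μ) - 1 := by
  intro t ht
  obtain ⟨hat, htb⟩ := ht
  have htI : t ∈ Icc a b := ⟨hat.le, htb⟩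
  have haI : a ∈ Icc a b := ⟨le_rfl, hab.le⟩
  set q : ℝ := g * Real.Gamma μ with hqdef
  have hq0 : 0 ≤ q := mul_nonneg hg (Real.Gamma_pos_of_pos hμ).le
  have hXa : 0 < Ψ t - Ψ a := sub_pos.2 (hΨmono haI htI hat)
  have hΨd : ∀ x ∈ Ioo a b, HasDerivAt Ψ (deriv Ψ x) x := by
    intro x hx
    have hmem : Icc a b ∈ nhds x := Icc_mem_nhds hx.1 hx.2
    exact ((hΨC1.differentiableOn one_ne_zero x (Ioo_subset_Icc_self hx)).differentiableAt
      hmem).hasDerivAt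
  have hΨpos : ∀ x ∈ Ioo a b, 0 ≤ deriv Ψ x := by
    intro x hx
    have hd := hΨd x hx
    have hslope := hasDerivAt_iff_tendsto_slope.1 hd
    have hslope' : Tendsto (slope Ψ x) (nhdsWithin x (Ioi x)) (nhds (deriv Ψ x)) :=
      hslope.mono_left (nhdsWithin_mono x (fun y hy => ne_of_gt hy))
    refine ge_of_tendsto hslope' ?_
    filter_upwards [Ioo_mem_nhdsGT_of_mem ⟨le_rfl, hx.2⟩] with y hy
    have hxy : Ψ x < Ψ y := hΨmono ⟨hx.1.le, hx.2.le⟩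
      ⟨(hx.1.trans hy.1).le, hy.2.le⟩ hy.1
    have hyx : 0 < y - x := sub_pos.2 hy.1
    rw [slope_def_field]
    apply div_nonneg <;> linarith
  -- FTC for each power
  have key : ∀ p : ℝ, 0 < p →
      IntegrableOn (fun s => deriv Ψ s * (Ψ t - Ψ s) ^ (p - 1)) (Ioo a t) volume ∧
      ∫ s in Ioo a t, deriv Ψ s * (Ψ t - Ψ s) ^ (p - 1) = (Ψ t - Ψ a) ^ p / p := by
    intro p hp
    have hΨcont : ContinuousOn Ψ (Icc a t) :=
      hΨC1.continuousOn.mono (Icc_subset_Icc le_rfl htb)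
    have hFcont : ContinuousOn (fun s => -((Ψ t - Ψ s) ^ p) / p) (Icc a t) :=
      (((continuousOn_const.sub hΨcont).rpow_const (fun x _ => Or.inr hp.le)).neg).div_const p
    have hFderiv : ∀ x ∈ Ioo a t,
        HasDerivAt (fun s => -((Ψ t - Ψ s) ^ p) / p)
          (deriv Ψ x * (Ψ t - Ψ x) ^ (p - 1)) x := by
      intro x hx
      have hx' : x ∈ Ioo a b := ⟨hx.1, hx.2.trans_le htb⟩
      have hxI : x ∈ Icc a b := ⟨hx'.1.le, hx'.2.le⟩
      have hne : Ψ t - Ψ x ≠ 0 := (sub_pos.2 (hΨmono hxI htI hx.2)).ne'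
      have h1 : HasDerivAt (fun s => Ψ t - Ψ s) (-(deriv Ψ x)) x :=
        (hΨd x hx').const_sub (Ψ t)
      have h2 := h1.rpow_const (p := p) (Or.inl hne)
      have h3 := (h2.neg).div_const p
      refine h3.congr_deriv ?_
      rw [div_eq_iff hp.ne']
      ring
    have hnonneg : ∀ x ∈ Ioo a t, 0 ≤ deriv Ψ x * (Ψ t - Ψ x) ^ (p - 1) := by
      intro x hx
      have hx' : x ∈ Ioo a b := ⟨hx.1, hx.2.trans_le htb⟩
      have hxI : x ∈ Icc a b := ⟨hx'.1.le, hx'.2.le⟩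
      have hXx := hΨmono hxI htI hx.2
      exact mul_nonneg (hΨpos x hx') (Real.rpow_nonneg (by linarith) _)
    have hint : IntegrableOn (fun s => deriv Ψ s * (Ψ t - Ψ s) ^ (p - 1)) (Ioc a t) volume :=
      intervalIntegral.integrableOn_deriv_of_nonneg hFcont hFderiv hnonneg
    constructor
    · exact hint.mono_set Ioo_subset_Ioc_self
    · have hftc := intervalIntegral.integral_eq_sub_of_hasDeriv_right_of_le hat.le hFcont
        (fun x hx => (hFderiv x hx).hasDerivWithinAt)
        ((intervalIntegrable_iff_integrableOn_Ioc_of_le hat.le).2 hint)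
      rw [intervalIntegral.integral_of_le hat.le, integral_Ioc_eq_integral_Ioo] at hftc
      rw [hftc]
      simp only [sub_self]
      rw [Real.zero_rpow hp.ne']
      ring
  -- Part 1
  have part1 : ∀ s ∈ Ico a t, Summable (fun k : ℕ =>
      (q ^ (k + 1) / Real.Gamma (μ * (k + 1))) * (Ψ t - Ψ s) ^ ((k + 1 : ℕ) * μ - 1)) := by
    intro s hs
    have hsI : s ∈ Icc a b := ⟨hs.1, hs.2.le.trans htb⟩
    have hX : 0 < Ψ t - Ψ s := sub_pos.2 (hΨmono hsI htI hs.2)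
    have hbase : Summable (fun k : ℕ =>
        (q * (Ψ t - Ψ s) ^ μ) ^ k / Real.Gamma (μ * k + μ)) :=
      summable_gamma_series hμ hμ (mul_nonneg hq0 (Real.rpow_nonneg hX.le μ))
    apply (hbase.mul_left (q * (Ψ t - Ψ s) ^ (μ - 1))).congr
    intro k
    have hμk : (0:ℝ) < μ * k + μ := by positivity
    have hΓ : Real.Gamma (μ * k + μ) ≠ 0 := (Real.Gamma_pos_of_pos hμk).ne'
    have e1 : ((k + 1 : ℕ) : ℝ) * μ - 1 = μ * k + (μ - 1) := by push_cast; ring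
    have e3 : μ * ((k : ℝ) + 1) = μ * k + μ := by ring
    rw [e1, e3, Real.rpow_add hX, Real.rpow_mul hX.le, Real.rpow_natCast, mul_pow, pow_succ]
    field_simp
  refine ⟨part1, ?_⟩
  -- Part 2
  set z : ℝ := q * (Ψ t - Ψ a) ^ μ with hzdef
  have hz0 : 0 ≤ z := mul_nonneg hq0 (Real.rpow_nonneg hXa.le μ)
  have hp : ∀ k : ℕ, (0:ℝ) < ((k : ℝ) + 1) * μ := by
    intro k; positivity
  have hμk1 : ∀ k : ℕ, (0:ℝ) < μ * ((k:ℝ) + 1) := by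
    intro k; positivity
  have hc0 : ∀ k : ℕ, 0 ≤ q ^ (k + 1) / Real.Gamma (μ * ((k:ℝ) + 1)) := fun k =>
    div_nonneg (pow_nonneg hq0 _) (Real.Gamma_pos_of_pos (hμk1 k)).le
  rw [intervalIntegral.integral_of_le hat.le, integral_Ioc_eq_integral_Ioo]
  simp_rw [Nat.cast_add, Nat.cast_one]
  have hGint : ∀ k : ℕ, Integrable (fun s =>
      (q ^ (k + 1) / Real.Gamma (μ * ((k:ℝ) + 1))) *
        (deriv Ψ s * (Ψ t - Ψ s) ^ (((k:ℝ) + 1) * μ - 1)))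
      (volume.restrict (Ioo a t)) := fun k =>
    ((key _ (hp k)).1.const_mul _)
  have hGval : ∀ k : ℕ, (∫ s in Ioo a t,
      (q ^ (k + 1) / Real.Gamma (μ * ((k:ℝ) + 1))) *
        (deriv Ψ s * (Ψ t - Ψ s) ^ (((k:ℝ) + 1) * μ - 1)))
      = z ^ (k + 1) / Real.Gamma (μ * ((k:ℝ) + 1) + 1) := by
    intro k
    rw [MeasureTheory.integral_const_mul, (key _ (hp k)).2]
    rw [Real.Gamma_add_one (hμk1 k).ne']
    have hXp : (Ψ t - Ψ a) ^ (((k:ℝ) + 1) * μ) = ((Ψ t - Ψ a) ^ μ) ^ (k + 1) := by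
      rw [show ((k:ℝ) + 1) * μ = μ * ((k:ℝ) + 1) by ring, Real.rpow_mul hXa.le,
        show ((k:ℝ) + 1) = ((k + 1 : ℕ) : ℝ) by push_cast; ring, Real.rpow_natCast]
    rw [hXp, hzdef, mul_pow]
    have hΓ : Real.Gamma (μ * ((k:ℝ) + 1)) ≠ 0 := (Real.Gamma_pos_of_pos (hμk1 k)).ne'
    field_simp
    ring
  have hGnorm : ∀ k : ℕ, (∫ s in Ioo a t,
      ‖(q ^ (k + 1) / Real.Gamma (μ * ((k:ℝ) + 1))) *
        (deriv Ψ s * (Ψ t - Ψ s) ^ (((k:ℝ) + 1) * μ - 1))‖)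
      = ∫ s in Ioo a t,
      (q ^ (k + 1) / Real.Gamma (μ * ((k:ℝ) + 1))) *
        (deriv Ψ s * (Ψ t - Ψ s) ^ (((k:ℝ) + 1) * μ - 1)) := by
    intro k
    apply setIntegral_congr_fun measurableSet_Ioo
    intro s hs
    have hs' : s ∈ Ioo a b := ⟨hs.1, hs.2.trans_le htb⟩
    have hX0 : Ψ s < Ψ t := hΨmono ⟨hs'.1.le, hs'.2.le⟩ htI hs.2
    exact Real.norm_of_nonneg (mul_nonneg (hc0 k)
      (mul_nonneg (hΨpos s hs') (Real.rpow_nonneg (by linarith) _)))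
  have hsum2 : Summable (fun k : ℕ => z ^ (k + 1) / Real.Gamma (μ * ((k:ℝ) + 1) + 1)) := by
    have hb := summable_gamma_series (b := μ + 1) hμ (by linarith) hz0
    apply (hb.mul_left z).congr
    intro k
    rw [pow_succ, show μ * ((k:ℝ) + 1) + 1 = μ * k + (μ + 1) by ring]
    ring
  have hGsum : Summable (fun k : ℕ => ∫ s in Ioo a t,
      ‖(q ^ (k + 1) / Real.Gamma (μ * ((k:ℝ) + 1))) *
        (deriv Ψ s * (Ψ t - Ψ s) ^ (((k:ℝ) + 1) * μ - 1))‖) :=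
    hsum2.congr (fun k => ((hGnorm k).trans (hGval k)).symm)
  have hswap := MeasureTheory.integral_tsum_of_summable_integral_norm hGint hGsum
  have hpt : ∀ s : ℝ, deriv Ψ s * (∑' k : ℕ,
      (q ^ (k + 1) / Real.Gamma (μ * ((k:ℝ) + 1))) *
        (Ψ t - Ψ s) ^ (((k:ℝ) + 1) * μ - 1))
      = ∑' k : ℕ, (q ^ (k + 1) / Real.Gamma (μ * ((k:ℝ) + 1))) *
        (deriv Ψ s * (Ψ t - Ψ s) ^ (((k:ℝ) + 1) * μ - 1)) := by
    intro s
    rw [← tsum_mul_left]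
    exact tsum_congr fun k => by ring
  calc (∫ s in Ioo a t, deriv Ψ s * ∑' k : ℕ,
        (q ^ (k + 1) / Real.Gamma (μ * ((k:ℝ) + 1))) *
          (Ψ t - Ψ s) ^ (((k:ℝ) + 1) * μ - 1))
      = ∫ s in Ioo a t, ∑' k : ℕ,
        (q ^ (k + 1) / Real.Gamma (μ * ((k:ℝ) + 1))) *
          (deriv Ψ s * (Ψ t - Ψ s) ^ (((k:ℝ) + 1) * μ - 1)) := by
        exact MeasureTheory.integral_congr_ae (Filter.Eventually.of_forall fun s => hpt s)
    _ = ∑' k : ℕ, ∫ s in Ioo a t,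
        (q ^ (k + 1) / Real.Gamma (μ * ((k:ℝ) + 1))) *
          (deriv Ψ s * (Ψ t - Ψ s) ^ (((k:ℝ) + 1) * μ - 1)) := hswap.symm
    _ = ∑' k : ℕ, z ^ (k + 1) / Real.Gamma (μ * ((k:ℝ) + 1) + 1) := tsum_congr hGval
    _ = mittagLeffler μ z - 1 := by
        unfold mittagLeffler
        have hML : Summable (fun k : ℕ => z ^ k / Real.Gamma (μ * k + 1)) :=
          summable_gamma_series hμ one_pos hz0
        rw [hML.tsum_eq_zero_add]
        simp only [Nat.cast_zero, mul_zero, zero_add, pow_zero, Real.Gamma_one, div_one]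
        rw [add_sub_cancel_left]
        exact tsum_congr fun k => by push_cast; ring_nf
end
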